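/- Let k be a field of characteristic p > 0, G a finite p-group, and A a trace-surjective commutative G-algebra. Then the maps I ↦ AI and J ↦ J ∩ A^G are mutually inverse bijections between the set of ideals of A^G and the set of G-stable ideals of A. In particular, every ideal I of A^G satisfies AI ∩ A^G = I, and every G-stable ideal J of A satisfies (J ∩ A^G)A = J. -/

import Mathlib

/-- The subalgebra of `G`-invariants of a `G`-algebra `A`. -/
def invariantSubalgebra (k G A : Type*) [CommSemiring k] [Group G] [CommRing A] [Algebra k A]
    [MulSemiringAction G A] [SMulCommClass G k A] : Subalgebra k A where
  carrier := {a | ∀ g : G, g • a = a}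
  add_mem' := by intro a b ha hb g; rw [smul_add, ha g, hb g]
  mul_mem' := by intro a b ha hb g; rw [smul_mul', ha g, hb g]
  algebraMap_mem' := by
    intro c g
    rw [Algebra.algebraMap_eq_smul_one, smul_comm, smul_one]
  one_mem' := fun g => smul_one g
  zero_mem' := fun g => smul_zero g

section Aux

variable {G : Type*} [Group G] [Fintype G]
variable {A : Type*} [CommRing A] [MulSemiringAction G A]

/-- The trace of any element is `G`-invariant. -/
lemma aux_tr_invariant (g : G) (x : A) : g • (∑ h : G, h • x) = ∑ h : G, h • x := by
  rw [Finset.smul_sum]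
  calc ∑ h : G, g • h • x = ∑ h : G, (g * h) • x := by
        refine Finset.sum_congr rfl fun h _ => ?_
        rw [mul_smul]
    _ = ∑ h : G, h • x :=
        Fintype.sum_equiv (Equiv.mulLeft g) _ _ (fun h => rfl)

/-- The trace is `A^G`-linear. -/
lemma aux_tr_mul (x i : A) (hi : ∀ g : G, g • i = i) :
    (∑ h : G, h • (x * i)) = (∑ h : G, h • x) * i := by
  rw [Finset.sum_mul]
  exact Finset.sum_congr rfl fun h _ => by rw [smul_mul', hi h]

end Aux

/-- For a trace-surjective commutative `G`-algebra `A` (`G` a finite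
`p`-group, `char k = p`), extension `I ↦ AI` and contraction `J ↦ J ∩ A^G` are mutually
inverse bijections between ideals of `A^G` and `G`-stable ideals of `A`:
`AI ∩ A^G = I` for every ideal `I` of `A^G`, and `(J ∩ A^G)A = J` for every `G`-stable
ideal `J` of `A`. -/
theorem ideal_galois_correspondence
    {p : ℕ} [Fact p.Prime] (k : Type*) [Field k] [CharP k p]
    (G : Type*) [Group G] [Fintype G] (hG : IsPGroup p G)
    (A : Type*) [CommRing A] [Algebra k A] [MulSemiringAction G A] [SMulCommClass G k A]
    (hts : ∀ b : A, (∀ g : G, g • b = b) → ∃ x : A, (∑ g : G, g • x) = b) :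
    (∀ I : Ideal (invariantSubalgebra k G A),
        Ideal.comap (invariantSubalgebra k G A).val
          (Ideal.map (invariantSubalgebra k G A).val I) = I) ∧
    (∀ J : Ideal A, (∀ (g : G), ∀ a ∈ J, g • a ∈ J) →
        Ideal.map (invariantSubalgebra k G A).val
          (Ideal.comap (invariantSubalgebra k G A).val J) = J) := by
  classical
  set R := invariantSubalgebra k G A with hR
  obtain ⟨c, hc⟩ := hts 1 (fun g => smul_one g)
  constructor
  · -- Part 1 : comap (map I) = I
    intro I
    refine le_antisymm (fun a ha => ?_) Ideal.le_comap_map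
    have ha' : (a : A) ∈ Ideal.span (R.val '' (I : Set R)) := ha
    have key : ∀ (x : A), x ∈ Ideal.span (R.val '' (I : Set R)) → ∀ r : A,
        (⟨∑ g : G, g • (c * r * x), fun g => aux_tr_invariant g _⟩ : R) ∈ I := by
      intro x hx
      induction hx using Submodule.span_induction with
      | mem x hxs =>
        obtain ⟨i, hiI, rfl⟩ := hxs
        intro r
        have hival : ∀ g : G, g • (R.val i) = R.val i := i.2
        have hmul : (⟨∑ g : G, g • (c * r * R.val i), fun g => aux_tr_invariant g _⟩ : R)
            = (⟨∑ g : G, g • (c * r), fun g => aux_tr_invariant g _⟩ : R) * i := by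
          apply Subtype.ext
          exact aux_tr_mul (c * r) (R.val i) hival
        rw [hmul]
        exact I.mul_mem_left _ hiI
      | zero =>
        intro r
        have : (⟨∑ g : G, g • (c * r * 0), fun g => aux_tr_invariant g _⟩ : R) = 0 := by
          apply Subtype.ext
          simp
        rw [this]; exact I.zero_mem
      | add x y hx hy ihx ihy =>
        intro r
        have : (⟨∑ g : G, g • (c * r * (x + y)), fun g => aux_tr_invariant g _⟩ : R)
            = ⟨∑ g : G, g • (c * r * x), fun g => aux_tr_invariant g _⟩
              + ⟨∑ g : G, g • (c * r * y), fun g => aux_tr_invariant g _⟩ := by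
          apply Subtype.ext
          simp [mul_add, smul_add, Finset.sum_add_distrib]
        rw [this]; exact I.add_mem (ihx r) (ihy r)
      | smul s x hx ihx =>
        intro r
        have he : ∀ g : G, g • (c * r * (s • x)) = g • (c * (r * s) * x) := by
          intro g
          congr 1
          simp only [smul_eq_mul]
          ring
        have : (⟨∑ g : G, g • (c * r * (s • x)), fun g => aux_tr_invariant g _⟩ : R)
            = ⟨∑ g : G, g • (c * (r * s) * x), fun g => aux_tr_invariant g _⟩ := by
          apply Subtype.ext
          exact Finset.sum_congr rfl fun g _ => he g
        rw [this]; exact ihx (r * s)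
    have hkey := key _ ha' 1
    have hfin : (⟨∑ g : G, g • (c * 1 * (a : A)), fun g => aux_tr_invariant g _⟩ : R) = a := by
      apply Subtype.ext
      have haval : ∀ g : G, g • (a : A) = (a : A) := a.2
      show (∑ g : G, g • (c * 1 * (a : A))) = (a : A)
      rw [aux_tr_mul (c * 1) _ haval]
      simp only [mul_one]
      rw [hc, one_mul]
    rwa [hfin] at hkey
  · -- Part 2 : map (comap J) = J for G-stable J
    intro J hJ
    refine le_antisymm (Ideal.map_le_iff_le_comap.mpr le_rfl) ?_
    set K := Ideal.map R.val (Ideal.comap R.val J) with hKdef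
    -- K is G-stable
    have hKg : ∀ (g : G) (x : A), x ∈ K → g • x ∈ K := by
      intro g x hx
      have hx' : x ∈ Ideal.span (R.val '' (Ideal.comap R.val J : Set R)) := hx
      clear hx
      induction hx' using Submodule.span_induction with
      | mem x hxs =>
        obtain ⟨i, hiI, rfl⟩ := hxs
        rw [show g • R.val i = R.val i from i.2 g]
        exact Ideal.mem_map_of_mem _ hiI
      | zero => rw [smul_zero]; exact K.zero_mem
      | add x y hx hy ihx ihy => rw [smul_add]; exact K.add_mem ihx ihy
      | smul s x hx ihx =>
        have : g • (s • x) = (g • s) * (g • x) := by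
          rw [smul_eq_mul, smul_mul']
        rw [this]
        exact K.mul_mem_left _ ihx
    -- trace step
    have keyTrace : ∀ b ∈ J, (∀ g : G, g • b - b ∈ K) → b ∈ K := by
      intro b hb hfix
      have h1 : (∑ g : G, g • (c * b)) ∈ J :=
        Ideal.sum_mem J (fun g _ => hJ g _ (J.mul_mem_left c hb))
      have h2 : (∑ g : G, g • (c * b)) ∈ R := fun g => aux_tr_invariant g _
      have h3 : (∑ g : G, g • (c * b)) ∈ K := by
        have : (⟨∑ g : G, g • (c * b), h2⟩ : R) ∈ Ideal.comap R.val J := h1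
        exact Ideal.mem_map_of_mem _ this
      have h4 : (∑ g : G, g • (c * b)) - b ∈ K := by
        have heq : (∑ g : G, g • (c * b)) - b = ∑ g : G, (g • c) * (g • b - b) := by
          simp only [mul_sub, Finset.sum_sub_distrib, smul_mul', ← Finset.sum_mul, hc,
            one_mul]
        rw [heq]
        exact Ideal.sum_mem K fun g _ => K.mul_mem_left _ (hfix g)
      have : (∑ g : G, g • (c * b)) - ((∑ g : G, g • (c * b)) - b) = b := by ring
      rw [← this]
      exact K.sub_mem h3 h4
    -- main argument by contradiction
    intro a haJ
    by_contra haK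
    -- the quotient ring B = A / K
    set q : A →+* A ⧸ K := Ideal.Quotient.mk K with hq
    have hqa : q a ≠ 0 := fun h => haK (Ideal.Quotient.eq_zero_iff_mem.mp h)
    -- the induced action of G on B
    have hlift : ∀ g : G, ∀ x ∈ K, q.comp (MulSemiringAction.toRingHom G A g) x = 0 := by
      intro g x hx
      exact Ideal.Quotient.eq_zero_iff_mem.mpr (hKg g x hx)
    set φ : G → (A ⧸ K) →+* (A ⧸ K) :=
      fun g => Ideal.Quotient.lift K (q.comp (MulSemiringAction.toRingHom G A g)) (hlift g)
        with hφdef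
    have hφ : ∀ (g : G) (x : A), φ g (q x) = q (g • x) := by
      intro g x
      exact Ideal.Quotient.lift_mk K _ _
    have hφ_one : ∀ b : A ⧸ K, φ 1 b = b := by
      intro b
      obtain ⟨x, rfl⟩ := Ideal.Quotient.mk_surjective b
      rw [show (Ideal.Quotient.mk K) x = q x from rfl, hφ, one_smul]
    have hφ_mul : ∀ (g h : G) (b : A ⧸ K), φ (g * h) b = φ g (φ h b) := by
      intro g h b
      obtain ⟨x, rfl⟩ := Ideal.Quotient.mk_surjective b
      rw [show (Ideal.Quotient.mk K) x = q x from rfl, hφ, hφ, hφ, mul_smul]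
    -- the additive subgroup generated by the orbit of q a
    have hp0 : ∀ x : A ⧸ K, p • x = 0 := by
      intro x
      obtain ⟨y, rfl⟩ := Ideal.Quotient.mk_surjective x
      have hpA : (p : A) = 0 := by
        rw [← map_natCast (algebraMap k A) p, CharP.cast_eq_zero, map_zero]
      rw [show (Ideal.Quotient.mk K) y = q y from rfl, ← map_nsmul, nsmul_eq_mul, hpA, zero_mul,
        map_zero]
    set M : AddSubgroup (A ⧸ K) := AddSubgroup.closure (Set.range fun g : G => q (g • a))
      with hMdef
    have hqaM : q a ∈ M := AddSubgroup.subset_closure ⟨1, by simp⟩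
    -- M is finite
    haveI : AddGroup.FG ↥M := by
      rw [AddGroup.fg_iff_addSubgroup_fg]
      exact (AddSubgroup.fg_iff M).mpr ⟨_, hMdef.symm, Set.finite_range _⟩
    have hMtor : AddMonoid.IsTorsion ↥M := by
      intro x
      rw [isOfFinAddOrder_iff_nsmul_eq_zero]
      refine ⟨p, (Fact.out : p.Prime).pos, ?_⟩
      apply Subtype.ext
      show ((p • x : ↥M) : A ⧸ K) = (0 : A ⧸ K)
      rw [AddSubmonoidClass.coe_nsmul]
      exact hp0 _
    haveI : Finite ↥M := AddCommGroup.finite_of_fg_torsion ↥M hMtor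
    -- G acts on M
    have hMstable : ∀ (g : G) (x : A ⧸ K), x ∈ M → φ g x ∈ M := by
      intro g x hx
      induction hx using AddSubgroup.closure_induction with
      | mem x hxs =>
        obtain ⟨h, rfl⟩ := hxs
        rw [hφ, ← mul_smul]
        exact AddSubgroup.subset_closure ⟨g * h, rfl⟩
      | zero => rw [map_zero]; exact M.zero_mem
      | add x y hx hy ihx ihy => rw [map_add]; exact M.add_mem ihx ihy
      | neg x hx ihx => rw [map_neg]; exact M.neg_mem ihx
    letI : MulAction G ↥M :=
      { smul := fun g v => ⟨φ g v.1, hMstable g v.1 v.2⟩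
        one_smul := fun v => Subtype.ext (hφ_one v.1)
        mul_smul := fun g h v => Subtype.ext (hφ_mul g h v.1) }
    have hsmul_def : ∀ (g : G) (v : ↥M), ((g • v : ↥M) : A ⧸ K) = φ g v.1 := fun g v => rfl
    -- the cardinality of M is divisible by p
    have hcardM : p ∣ Nat.card ↥M := by
      by_contra hnd
      have hcop : Nat.Coprime p (Nat.card ↥M) :=
        ((Fact.out : p.Prime).coprime_iff_not_dvd).mpr hnd
      have hall : ∀ x : ↥M, x = 0 := by
        intro x
        have h1 : addOrderOf x ∣ p := by
          apply addOrderOf_dvd_of_nsmul_eq_zero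
          apply Subtype.ext
          show ((p • x : ↥M) : A ⧸ K) = (0 : A ⧸ K)
          rw [AddSubmonoidClass.coe_nsmul]
          exact hp0 _
        have h2 : addOrderOf x ∣ Nat.card ↥M := addOrderOf_dvd_natCard x
        have h3 : addOrderOf x ∣ 1 := hcop ▸ Nat.dvd_gcd h1 h2
        rw [Nat.dvd_one] at h3
        exact AddMonoid.addOrderOf_eq_one_iff.mp h3
      exact hqa (by simpa using congrArg Subtype.val (hall ⟨q a, hqaM⟩))
    -- counting fixed points
    have hcard := hG.card_modEq_card_fixedPoints ↥M
    have hcardF : p ∣ Nat.card (MulAction.fixedPoints G ↥M) :=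
      Nat.modEq_zero_iff_dvd.mp (hcard.symm.trans (Nat.modEq_zero_iff_dvd.mpr hcardM))
    -- 0 is a fixed point
    have hzeroF : (0 : ↥M) ∈ MulAction.fixedPoints G ↥M := by
      intro g
      apply Subtype.ext
      rw [hsmul_def]
      exact map_zero (φ g)
    -- there is a nonzero fixed point
    have hex : ∃ v : ↥M, v ∈ MulAction.fixedPoints G ↥M ∧ v ≠ 0 := by
      by_contra hno
      push_neg at hno
      have hFeq : MulAction.fixedPoints G ↥M = {0} := by
        apply Set.eq_singleton_iff_unique_mem.mpr
        exact ⟨hzeroF, fun v hv => by by_contra h; exact h (hno v hv)⟩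
      rw [hFeq] at hcardF
      simp only [Nat.card_unique] at hcardF
      exact (Fact.out : p.Prime).ne_one (Nat.dvd_one.mp hcardF)
    obtain ⟨v, hvF, hv0⟩ := hex
    -- v comes from an element of J
    have hMJ : ∀ x ∈ M, ∃ b ∈ J, q b = x := by
      intro x hx
      have hle : M ≤ AddSubgroup.map (q : A →+ (A ⧸ K)) J.toAddSubgroup := by
        rw [hMdef]
        apply AddSubgroup.closure_le _ |>.mpr
        rintro _ ⟨g, rfl⟩
        exact ⟨g • a, hJ g a haJ, rfl⟩
      obtain ⟨b, hb, hqb⟩ := hle hx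
      exact ⟨b, hb, hqb⟩
    obtain ⟨b, hbJ, hqb⟩ := hMJ v.1 v.2
    have hfix : ∀ g : G, g • b - b ∈ K := by
      intro g
      have hval : φ g v.1 = v.1 := congrArg Subtype.val (hvF g)
      rw [← hqb, hφ] at hval
      exact Ideal.Quotient.eq.mp hval
    have : b ∈ K := keyTrace b hbJ hfix
    have : q b = 0 := Ideal.Quotient.eq_zero_iff_mem.mpr this
    exact hv0 (Subtype.ext (by rw [← hqb, this]; simp))
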